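/- Let m ∈ ℕ, let L : (ℂ²)^{⊗2m} →ₗ[ℂ] ℂ be a linear functional, and define ⟨H⟩ : ℝ^m → ℂ by ⟨H⟩(θ₁,…,θ_m) = L(⊗_{l=1}^m u(θ_l)), where u(θ) = (e₀ + exp(iθ)·e₁) ⊗ (e₀ + exp(−iθ)·e₁) ∈ ℂ² ⊗ ℂ². Then for every j ∈ {1,…,m}, the expectation of the partial derivative over parameters distributed independently and uniformly on [−π,π] vanishes: (1/(2π)^m) · ∫_{[−π,π]^m} (∂⟨H⟩/∂θ_j)(θ) dθ = 0. -/

import Mathlib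

open MeasureTheory
open scoped TensorProduct

noncomputable section

/-- `ℂ²` with standard basis vectors. -/
abbrev C2 : Type := ℂ × ℂ

def e0 : C2 := (1, 0)
def e1 : C2 := (0, 1)

/-- The pair of tensor factors carrying the parameter `θ`:
`u(θ) = (e₀ + exp(iθ)·e₁) ⊗ (e₀ + exp(−iθ)·e₁)`. -/
def u (θ : ℝ) : C2 ⊗[ℂ] C2 :=
  (e0 + Complex.exp (Complex.I * (θ : ℂ)) • e1) ⊗ₜ[ℂ]
    (e0 + Complex.exp (-(Complex.I * (θ : ℂ))) • e1)

namespace PQCAux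

/-- Constant tensors appearing in the expansion of `u`. -/
def w3 : Fin 3 → C2 ⊗[ℂ] C2 :=
  ![e0 ⊗ₜ[ℂ] e0 + e1 ⊗ₜ[ℂ] e1, e1 ⊗ₜ[ℂ] e0, e0 ⊗ₜ[ℂ] e1]

/-- Coefficient functions. -/
def c3 : Fin 3 → ℝ → ℂ :=
  ![fun _ => 1, fun t => Complex.exp (Complex.I * t),
    fun t => Complex.exp (-(Complex.I * t))]

/-- Derivatives of the coefficient functions. -/
def d3 : Fin 3 → ℝ → ℂ :=
  ![fun _ => 0, fun t => Complex.I * Complex.exp (Complex.I * t),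
    fun t => -(Complex.I * Complex.exp (-(Complex.I * t)))]

lemma c3_zero : c3 0 = fun _ => 1 := rfl
lemma c3_one : c3 1 = fun t : ℝ => Complex.exp (Complex.I * t) := rfl
lemma c3_two : c3 2 = fun t : ℝ => Complex.exp (-(Complex.I * t)) := rfl
lemma d3_zero : d3 0 = fun _ => 0 := rfl
lemma d3_one : d3 1 = fun t : ℝ => Complex.I * Complex.exp (Complex.I * t) := rfl
lemma d3_two : d3 2 = fun t : ℝ => -(Complex.I * Complex.exp (-(Complex.I * t))) := rfl

lemma u_eq (t : ℝ) : u t = ∑ k, c3 k t • w3 k := by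
  have hab : Complex.exp (-(Complex.I * t)) * Complex.exp (Complex.I * t) = 1 := by
    rw [← Complex.exp_add]; simp
  simp only [u, TensorProduct.tmul_add, TensorProduct.add_tmul, TensorProduct.smul_tmul',
    TensorProduct.tmul_smul, smul_smul, neg_smul, one_smul, smul_eq_mul, neg_one_mul, hab,
    c3, w3, Fin.sum_univ_three, Matrix.cons_val_zero, Matrix.cons_val_one, Matrix.head_cons,
    Matrix.cons_val_two, Matrix.tail_cons, smul_add]
  abel

lemma hasDerivAt_c3 (k : Fin 3) (t : ℝ) : HasDerivAt (c3 k) (d3 k t) t := by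
  have h0 : HasDerivAt (c3 0) (d3 0 t) t := by
    rw [c3_zero, d3_zero]; exact hasDerivAt_const t (1 : ℂ)
  have h1 : HasDerivAt (c3 1) (d3 1 t) t := by
    rw [c3_one, d3_one]
    have h : HasDerivAt (fun z : ℂ => Complex.exp (Complex.I * z))
        (Complex.I * Complex.exp (Complex.I * (t : ℂ))) (t : ℂ) := by
      simpa [mul_comm] using (((hasDerivAt_id (t : ℂ)).const_mul Complex.I).cexp)
    exact h.comp_ofReal
  have h2 : HasDerivAt (c3 2) (d3 2 t) t := by
    rw [c3_two, d3_two]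
    have h : HasDerivAt (fun z : ℂ => Complex.exp (-(Complex.I * z)))
        (-(Complex.I * Complex.exp (-(Complex.I * (t : ℂ))))) (t : ℂ) := by
      simpa [mul_comm] using ((((hasDerivAt_id (t : ℂ)).const_mul Complex.I).neg).cexp)
    exact h.comp_ofReal
  fin_cases k
  exacts [h0, h1, h2]

lemma continuous_c3 (k : Fin 3) : Continuous (c3 k) := by
  have h0 : Continuous (c3 0) := by rw [c3_zero]; fun_prop
  have h1 : Continuous (c3 1) := by rw [c3_one]; fun_prop
  have h2 : Continuous (c3 2) := by rw [c3_two]; fun_prop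
  fin_cases k
  exacts [h0, h1, h2]

lemma continuous_d3 (k : Fin 3) : Continuous (d3 k) := by
  have h0 : Continuous (d3 0) := by rw [d3_zero]; fun_prop
  have h1 : Continuous (d3 1) := by rw [d3_one]; fun_prop
  have h2 : Continuous (d3 2) := by rw [d3_two]; fun_prop
  fin_cases k
  exacts [h0, h1, h2]

lemma integral_d3 (k : Fin 3) : ∫ t in Set.Icc (-Real.pi) Real.pi, d3 k t = 0 := by
  have hle : -Real.pi ≤ Real.pi := by linarith [Real.pi_pos]
  have hpi1 : Complex.exp (Complex.I * (Real.pi : ℂ)) = -1 := by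
    rw [mul_comm, Complex.exp_pi_mul_I]
  have hpi2 : Complex.exp (Complex.I * ((-Real.pi : ℝ) : ℂ)) = -1 := by
    push_cast
    rw [mul_neg, Complex.exp_neg, mul_comm, Complex.exp_pi_mul_I]
    norm_num
  have hpi3 : Complex.exp (-Complex.I * (Real.pi : ℂ)) = -1 := by
    rw [neg_mul, Complex.exp_neg, mul_comm, Complex.exp_pi_mul_I]; norm_num
  have hpi4 : Complex.exp (-Complex.I * ((-Real.pi : ℝ) : ℂ)) = -1 := by
    push_cast
    rw [neg_mul, mul_neg, neg_neg, mul_comm, Complex.exp_pi_mul_I]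
  have h0 : ∫ t in Set.Icc (-Real.pi) Real.pi, d3 0 t = 0 := by
    rw [d3_zero]; simp
  have h1 : ∫ t in Set.Icc (-Real.pi) Real.pi, d3 1 t = 0 := by
    rw [d3_one, MeasureTheory.integral_Icc_eq_integral_Ioc,
      ← intervalIntegral.integral_of_le hle, intervalIntegral.integral_const_mul,
      integral_exp_mul_complex (c := Complex.I) Complex.I_ne_zero, hpi1, hpi2]
    simp
  have h2 : ∫ t in Set.Icc (-Real.pi) Real.pi, d3 2 t = 0 := by
    rw [d3_two]
    have heq : (fun t : ℝ => -(Complex.I * Complex.exp (-(Complex.I * t))))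
        = fun t : ℝ => -(Complex.I * Complex.exp (-Complex.I * t)) := by
      funext t; ring_nf
    rw [heq, MeasureTheory.integral_Icc_eq_integral_Ioc,
      ← intervalIntegral.integral_of_le hle, intervalIntegral.integral_neg,
      intervalIntegral.integral_const_mul,
      integral_exp_mul_complex (c := -Complex.I) (by simp),
      hpi3, hpi4]
    simp
  fin_cases k
  exacts [h0, h1, h2]

lemma restrict_box (m : ℕ) :
    (volume : Measure (Fin m → ℝ)).restrict
        (Set.Icc (fun _ : Fin m => -Real.pi) (fun _ => Real.pi)) =
      Measure.pi (fun _ : Fin m => volume.restrict (Set.Icc (-Real.pi) Real.pi)) := by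
  rw [← Set.pi_univ_Icc]
  refine (Measure.pi_eq fun s hs => ?_).symm
  rw [Measure.restrict_apply (MeasurableSet.univ_pi hs), ← Set.pi_inter_distrib,
    volume_pi, Measure.pi_pi]
  exact Finset.prod_congr rfl fun i _ => (Measure.restrict_apply (hs i)).symm

lemma integral_box_prod (m : ℕ) (f : Fin m → ℝ → ℂ) :
    (∫ x, ∏ i, f i (x i)
        ∂(Measure.pi fun _ : Fin m => volume.restrict (Set.Icc (-Real.pi) Real.pi)))
      = ∏ i, ∫ t in Set.Icc (-Real.pi) Real.pi, f i t := by
  letI : MeasureSpace ℝ := ⟨volume.restrict (Set.Icc (-Real.pi) Real.pi)⟩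
  haveI : SigmaFinite (volume : Measure ℝ) := by
    exact Restrict.sigmaFinite _ _
  exact integral_fintype_prod_eq_prod f

/-- The factor functions of the integrand. -/
def E (m : ℕ) (j : Fin m) (s : Fin m → Fin 3) : Fin m → ℝ → ℂ :=
  Function.update (fun l => c3 (s l)) j (d3 (s j))

lemma E_same (m : ℕ) (j : Fin m) (s : Fin m → Fin 3) : E m j s j = d3 (s j) := by
  rw [E, Function.update_self]

lemma E_ne (m : ℕ) (j : Fin m) (s : Fin m → Fin 3) {l : Fin m} (h : l ≠ j) :
    E m j s l = c3 (s l) := by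
  rw [E, Function.update_of_ne h]

lemma continuous_E (m : ℕ) (j : Fin m) (s : Fin m → Fin 3) (l : Fin m) :
    Continuous (E m j s l) := by
  by_cases h : l = j
  · subst h; rw [E_same]; exact continuous_d3 _
  · rw [E_ne _ _ _ h]; exact continuous_c3 _

end PQCAux

open PQCAux in
/-- the expectation over uniformly distributed parameters of the
partial derivative of a circuit expectation vanishes. -/
theorem expectation_of_gradient_eq_zero (m : ℕ)
    (L : (⨂[ℂ] _ : Fin m, C2 ⊗[ℂ] C2) →ₗ[ℂ] ℂ)
    (H : (Fin m → ℝ) → ℂ)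
    (hH : ∀ θ, H θ = L (⨂ₜ[ℂ] l, u (θ l)))
    (j : Fin m) :
    (1 / (2 * Real.pi) ^ m : ℂ) *
      (∫ θ in Set.Icc (fun _ : Fin m => -Real.pi) (fun _ => Real.pi),
        deriv (fun t => H (Function.update θ j t)) (θ j)) = 0 := by
  classical
  -- value of `L` on the constant tensors
  set a : (Fin m → Fin 3) → ℂ := fun s => L (⨂ₜ[ℂ] l, w3 (s l)) with ha
  -- expansion of H as a trigonometric polynomial
  have hHs : ∀ θ : Fin m → ℝ,
      H θ = ∑ s : Fin m → Fin 3, (∏ l, c3 (s l) (θ l)) * a s := by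
    intro θ
    rw [hH]
    have h1 : (⨂ₜ[ℂ] l, u (θ l)) = ⨂ₜ[ℂ] l, ∑ k, c3 k (θ l) • w3 k := by
      simp_rw [u_eq]
    rw [h1, MultilinearMap.map_sum, map_sum]
    refine Finset.sum_congr rfl fun s _ => ?_
    rw [MultilinearMap.map_smul_univ, LinearMap.map_smul, smul_eq_mul]
  -- the factorization of products under `Function.update`
  have hupdate : ∀ (s : Fin m → Fin 3) (θ : Fin m → ℝ) (t : ℝ),
      (∏ l, c3 (s l) (Function.update θ j t l))
        = c3 (s j) t * ∏ l ∈ Finset.univ.erase j, c3 (s l) (θ l) := by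
    intro s θ t
    rw [← Finset.mul_prod_erase Finset.univ _ (Finset.mem_univ j)]
    congr 1
    · rw [Function.update_self]
    · exact Finset.prod_congr rfl fun l hl => by
        rw [Function.update_of_ne (Finset.ne_of_mem_erase hl)]
  -- explicit derivative
  have hderiv : ∀ θ : Fin m → ℝ,
      deriv (fun t => H (Function.update θ j t)) (θ j)
        = ∑ s : Fin m → Fin 3,
            (d3 (s j) (θ j) * ∏ l ∈ Finset.univ.erase j, c3 (s l) (θ l)) * a s := by
    intro θ
    have hfun : (fun t => H (Function.update θ j t)) = fun t =>
        ∑ s : Fin m → Fin 3,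
          (c3 (s j) t * ∏ l ∈ Finset.univ.erase j, c3 (s l) (θ l)) * a s := by
      funext t
      rw [hHs]
      exact Finset.sum_congr rfl fun s _ => by rw [hupdate]
    rw [hfun]
    refine (HasDerivAt.fun_sum fun s _ => ?_).deriv
    exact ((hasDerivAt_c3 (s j) (θ j)).mul_const _).mul_const _
  -- the integrand for each `s`, written as a product over all coordinates
  have hprod : ∀ (s : Fin m → Fin 3) (θ : Fin m → ℝ),
      d3 (s j) (θ j) * ∏ l ∈ Finset.univ.erase j, c3 (s l) (θ l)
        = ∏ l, E m j s l (θ l) := by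
    intro s θ
    rw [← Finset.mul_prod_erase Finset.univ _ (Finset.mem_univ j)]
    congr 1
    · rw [E_same]
    · exact Finset.prod_congr rfl fun l hl =>
        by rw [E_ne _ _ _ (Finset.ne_of_mem_erase hl)]
  -- integrability of each summand on the box
  have hint : ∀ s : Fin m → Fin 3,
      IntegrableOn (fun θ : Fin m → ℝ => (∏ l, E m j s l (θ l)) * a s)
        (Set.Icc (fun _ : Fin m => -Real.pi) (fun _ => Real.pi)) volume := by
    intro s
    refine ContinuousOn.integrableOn_compact isCompact_Icc (Continuous.continuousOn ?_)
    refine Continuous.mul ?_ continuous_const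
    exact continuous_finset_prod _ fun l _ => (continuous_E m j s l).comp (continuous_apply l)
  have key : (∫ θ in Set.Icc (fun _ : Fin m => -Real.pi) (fun _ => Real.pi),
      deriv (fun t => H (Function.update θ j t)) (θ j)) = 0 := by
    have h1 : (fun θ : Fin m → ℝ => deriv (fun t => H (Function.update θ j t)) (θ j))
        = fun θ => ∑ s : Fin m → Fin 3, (∏ l, E m j s l (θ l)) * a s := by
      funext θ
      rw [hderiv]
      exact Finset.sum_congr rfl fun s _ => by rw [hprod]
    rw [h1, integral_finset_sum _ fun s _ => hint s]
    refine Finset.sum_eq_zero fun s _ => ?_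
    rw [integral_mul_const, restrict_box, integral_box_prod]
    rw [Finset.prod_eq_zero (Finset.mem_univ j) (by rw [E_same]; exact integral_d3 _),
      zero_mul]
  rw [key, mul_zero]
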